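/- For every n ≥ 4, the graph obtained from the disjoint union K_2 + K_n by adding one edge between the two components has product irregularity strength 3. -/

import Mathlib

open Finset

open scoped Classical in
/-- The product degree of vertex `v`: the product of the labels of the edges incident with `v`. -/
noncomputable def pdeg {V : Type*} [Fintype V] (G : SimpleGraph V) (w : Sym2 V → ℕ) (v : V) : ℕ :=
  ∏ u ∈ Finset.univ.filter (fun u => G.Adj v u), w s(v, u)

/-- A labelling is product-irregular if distinct vertices have distinct product degrees. -/
def ProductIrregular {V : Type*} [Fintype V] (G : SimpleGraph V) (w : Sym2 V → ℕ) : Prop :=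
  Function.Injective (pdeg G w)

/-- The product irregularity strength: the least `s` admitting a product-irregular labelling
with labels in `{1,…,s}`. -/
noncomputable def ps {V : Type*} [Fintype V] (G : SimpleGraph V) : ℕ :=
  sInf {s : ℕ | ∃ w : Sym2 V → ℕ,
    (∀ u v : V, G.Adj u v → w s(u, v) ∈ Finset.Icc 1 s) ∧ ProductIrregular G w}
/-- The disjoint union `K_n + K_m` of two complete graphs. -/
def cliquePair (n m : ℕ) : SimpleGraph (Fin n ⊕ Fin m) where
  Adj a b := a ≠ b ∧ a.isLeft = b.isLeft
  symm := ⟨fun a b h => ⟨h.1.symm, h.2.symm⟩⟩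
  loopless := ⟨fun a h => h.1 rfl⟩

/-- Adding a single edge joining `u` and `v`. -/
def addEdge {V : Type*} (G : SimpleGraph V) (u v : V) : SimpleGraph V :=
  G ⊔ SimpleGraph.fromEdgeSet {s(u, v)}

-- auxiliary
def lab (n i j : ℕ) : ℕ :=
  if (i = 0 ∧ j = n / 2) ∨ (i = n / 2 ∧ j = 0) then 3
  else if n ≤ i + j + 1 then 2 else 1

lemma lab_comm (n i j : ℕ) : lab n i j = lab n j i := by
  unfold lab; split_ifs <;> omega

def Ee (n i : ℕ) : ℕ := (i + 1 - (if n ≤ 2*i+1 then 1 else 0)) + (if i = n-1 then 1 else 0)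

def Ff (n i : ℕ) : ℕ := if i = 0 ∨ i = n / 2 then 1 else 0

lemma Ee_pos (n i : ℕ) (hn : 4 ≤ n) (hi : i < n) : 1 ≤ Ee n i := by
  unfold Ee; split_ifs <;> omega

lemma Ee_two (n i : ℕ) (hn : 4 ≤ n) (hi : i < n) (h : Ff n i = 0) : 2 ≤ Ee n i := by
  unfold Ff at h; unfold Ee; split_ifs at * <;> omega

lemma EF_inj (n : ℕ) (hn : 4 ≤ n) (i j : ℕ) (hi : i < n) (hj : j < n)
    (hF : Ff n i = Ff n j) (hE : Ee n i = Ee n j) : i = j := by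
  unfold Ff Ee at *; split_ifs at * <;> omega

lemma adj_iff (n : ℕ) (a : Fin 2) (b : Fin n) (x y : Fin 2 ⊕ Fin n) :
    (addEdge (cliquePair 2 n) (Sum.inl a) (Sum.inr b)).Adj x y ↔
      ((x ≠ y ∧ x.isLeft = y.isLeft) ∨
        ((x = Sum.inl a ∧ y = Sum.inr b) ∨ (x = Sum.inr b ∧ y = Sum.inl a))) := by
  simp only [addEdge, SimpleGraph.sup_adj, SimpleGraph.fromEdgeSet_adj, Set.mem_singleton_iff,
    Sym2.eq_iff, cliquePair]
  constructor
  · rintro (h | ⟨(⟨rfl, rfl⟩ | ⟨rfl, rfl⟩), h2⟩)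
    · exact Or.inl h
    · exact Or.inr (Or.inl ⟨rfl, rfl⟩)
    · exact Or.inr (Or.inr ⟨rfl, rfl⟩)
  · rintro (h | (⟨rfl, rfl⟩ | ⟨rfl, rfl⟩))
    · exact Or.inl h
    · exact Or.inr ⟨Or.inl ⟨rfl, rfl⟩, by simp⟩
    · exact Or.inr ⟨Or.inr ⟨rfl, rfl⟩, by simp⟩

def sg (n : ℕ) (b : Fin n) : Fin n ≃ Fin n :=
  Equiv.swap b ⟨n - 1, Nat.sub_lt b.pos Nat.one_pos⟩

lemma sg_eq_last_iff (n : ℕ) (b v : Fin n) :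
    ((sg n b v : Fin n) : ℕ) = n - 1 ↔ v = b := by
  constructor
  · intro h
    have : sg n b v = ⟨n - 1, Nat.sub_lt b.pos Nat.one_pos⟩ := Fin.ext h
    have h2 : sg n b v = sg n b b := by
      rw [this]; simp [sg, Equiv.swap_apply_left]
    exact (sg n b).injective h2
  · rintro rfl; simp [sg, Equiv.swap_apply_left]

def wfn (n : ℕ) (b : Fin n) : (Fin 2 ⊕ Fin n) → (Fin 2 ⊕ Fin n) → ℕ :=
  fun x y => match x, y with
  | .inl _, .inl _ => 1
  | .inl _, .inr _ => 2
  | .inr _, .inl _ => 2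
  | .inr u, .inr v => lab n (sg n b u) (sg n b v)

noncomputable def wlab (n : ℕ) (b : Fin n) : Sym2 (Fin 2 ⊕ Fin n) → ℕ :=
  Sym2.lift ⟨wfn n b, by
    intro x y
    cases x <;> cases y <;> simp [wfn, lab_comm]⟩

lemma wlab_mk (n : ℕ) (b : Fin n) (x y : Fin 2 ⊕ Fin n) :
    wlab n b s(x, y) = wfn n b x y := rfl

lemma wlab_mem (n : ℕ) (b : Fin n) (x y : Fin 2 ⊕ Fin n) :
    wlab n b s(x, y) ∈ Finset.Icc 1 3 := by
  rw [wlab_mk]; rw [Finset.mem_Icc]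
  cases x <;> cases y <;> simp [wfn] <;> (unfold lab; split_ifs <;> omega)

lemma prod_lab (n : ℕ) (hn : 4 ≤ n) (i : Fin n) :
    ∏ j : Fin n, (if j = i then 1 else lab n (i : ℕ) (j : ℕ)) =
      3 ^ Ff n (i : ℕ) * 2 ^ ((i:ℕ) + 1 - (if n ≤ 2*(i:ℕ)+1 then 1 else 0)) := by
  have hfun : ∀ j : Fin n, (if j = i then 1 else lab n (i : ℕ) (j : ℕ))
      = (if ((i:ℕ) = 0 ∧ (j:ℕ) = n/2) ∨ ((i:ℕ) = n/2 ∧ (j:ℕ) = 0) then 3 else 1)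
        * (if (j ≠ i ∧ n ≤ (i:ℕ)+(j:ℕ)+1) then 2 else 1) := by
    intro j
    by_cases h : j = i
    · subst h
      have hjj : (j:ℕ) < n := j.isLt
      rw [if_pos rfl, if_neg (show ¬(((j:ℕ) = 0 ∧ (j:ℕ) = n/2) ∨ ((j:ℕ) = n/2 ∧ (j:ℕ) = 0)) by
        rintro (⟨h1, h2⟩ | ⟨h1, h2⟩) <;> omega),
        if_neg (show ¬(j ≠ j ∧ n ≤ (j:ℕ)+(j:ℕ)+1) by rintro ⟨h1, -⟩; exact h1 rfl), one_mul]
    · have hj : (j ≠ i ∧ n ≤ (i:ℕ)+(j:ℕ)+1) ↔ (n ≤ (i:ℕ)+(j:ℕ)+1) := by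
        simp [h]
      rw [if_congr hj rfl rfl]
      unfold lab
      have hii : (i:ℕ) < n := i.isLt
      have hjj : (j:ℕ) < n := j.isLt
      split_ifs <;> omega
  rw [Finset.prod_congr rfl (fun j _ => hfun j), Finset.prod_mul_distrib]
  congr 1
  · -- the 3-part
    have hii : (i:ℕ) < n := i.isLt
    rcases eq_or_ne (i:ℕ) 0 with hi0 | hi0
    · have ht : (n/2) < n := by omega
      have hc : ((⟨n/2, ht⟩ : Fin n) : ℕ) = n/2 := rfl
      have key : ∀ j : Fin n, (if ((i:ℕ) = 0 ∧ (j:ℕ) = n/2) ∨ ((i:ℕ) = n/2 ∧ (j:ℕ) = 0) then (3:ℕ) else 1)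
          = if j = (⟨n/2, ht⟩ : Fin n) then 3 else 1 := by
        intro j
        refine if_congr ?_ rfl rfl
        rw [Fin.ext_iff, hc]
        omega
      rw [Finset.prod_congr rfl (fun j _ => key j), Finset.prod_ite_eq']
      rw [if_pos (Finset.mem_univ _)]
      have : Ff n (i:ℕ) = 1 := by unfold Ff; rw [if_pos (Or.inl hi0)]
      rw [this, pow_one]
    · rcases eq_or_ne (i:ℕ) (n/2) with hit | hit
      · have hz : 0 < n := by omega
        have hc : ((⟨0, hz⟩ : Fin n) : ℕ) = 0 := rfl
        have key : ∀ j : Fin n, (if ((i:ℕ) = 0 ∧ (j:ℕ) = n/2) ∨ ((i:ℕ) = n/2 ∧ (j:ℕ) = 0) then (3:ℕ) else 1)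
            = if j = (⟨0, hz⟩ : Fin n) then 3 else 1 := by
          intro j
          refine if_congr ?_ rfl rfl
          rw [Fin.ext_iff, hc]
          omega
        rw [Finset.prod_congr rfl (fun j _ => key j), Finset.prod_ite_eq']
        rw [if_pos (Finset.mem_univ _)]
        have : Ff n (i:ℕ) = 1 := by unfold Ff; rw [if_pos (Or.inr hit)]
        rw [this, pow_one]
      · have key : ∀ j : Fin n, (if ((i:ℕ) = 0 ∧ (j:ℕ) = n/2) ∨ ((i:ℕ) = n/2 ∧ (j:ℕ) = 0) then (3:ℕ) else 1)
            = 1 := by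
          intro j; rw [if_neg]; rintro (⟨h, -⟩ | ⟨h, -⟩) <;> [exact hi0 h; exact hit h]
        rw [Finset.prod_congr rfl (fun j _ => key j), Finset.prod_const_one]
        have : Ff n (i:ℕ) = 0 := by unfold Ff; rw [if_neg]; rintro (h | h) <;> [exact hi0 h; exact hit h]
        rw [this, pow_zero]
  · -- the 2-part
    rw [Finset.prod_ite (fun _ => (2:ℕ)) (fun _ => (1:ℕ)), Finset.prod_const, Finset.prod_const_one,
      mul_one]
    congr 1
    have hii : (i:ℕ) < n := i.isLt
    have hc : n - 1 - (i:ℕ) < n := by omega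
    have hset : Finset.univ.filter (fun j : Fin n => j ≠ i ∧ n ≤ (i:ℕ)+(j:ℕ)+1)
        = (Finset.univ.filter (fun j : Fin n => n ≤ (i:ℕ)+(j:ℕ)+1)).erase i := by
      ext j
      simp only [Finset.mem_filter, Finset.mem_univ, true_and, Finset.mem_erase, ne_eq]
    have hIci : Finset.univ.filter (fun j : Fin n => n ≤ (i:ℕ)+(j:ℕ)+1)
        = Finset.Ici (⟨n - 1 - (i:ℕ), hc⟩ : Fin n) := by
      ext j
      simp only [Finset.mem_filter, Finset.mem_univ, true_and, Finset.mem_Ici, Fin.le_def]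
      omega
    rw [hset, Finset.card_erase_eq_ite, hIci, Fin.card_Ici]
    simp only [Finset.mem_Ici, Fin.le_def]
    split_ifs <;> omega

lemma pdeg_inr (n : ℕ) (hn : 4 ≤ n) (a : Fin 2) (b : Fin n) (v : Fin n) :
    pdeg (addEdge (cliquePair 2 n) (Sum.inl a) (Sum.inr b)) (wlab n b) (Sum.inr v) =
      3 ^ Ff n ((sg n b v : Fin n) : ℕ) * 2 ^ Ee n ((sg n b v : Fin n) : ℕ) := by
  classical
  unfold pdeg
  rw [Finset.prod_filter, Fintype.prod_sum_type]
  have hA : (∏ x : Fin 2, if (addEdge (cliquePair 2 n) (Sum.inl a) (Sum.inr b)).Adj (Sum.inr v) (Sum.inl x)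
      then wlab n b s(Sum.inr v, Sum.inl x) else 1) = if v = b then 2 else 1 := by
    have key : ∀ x : Fin 2, (if (addEdge (cliquePair 2 n) (Sum.inl a) (Sum.inr b)).Adj (Sum.inr v) (Sum.inl x)
        then wlab n b s(Sum.inr v, Sum.inl x) else 1) = if v = b ∧ x = a then 2 else 1 := by
      intro x
      refine if_congr ?_ rfl rfl
      rw [adj_iff]
      simp [wfn, eq_comm, and_comm]
    rw [Finset.prod_congr rfl (fun x _ => key x)]
    by_cases hv : v = b
    · simp only [hv, true_and]
      rw [Finset.prod_ite_eq', if_pos (Finset.mem_univ _)]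
      simp
    · simp [hv]
  have hB : (∏ y : Fin n, if (addEdge (cliquePair 2 n) (Sum.inl a) (Sum.inr b)).Adj (Sum.inr v) (Sum.inr y)
      then wlab n b s(Sum.inr v, Sum.inr y) else 1)
      = 3 ^ Ff n ((sg n b v : Fin n) : ℕ) *
        2 ^ (((sg n b v : Fin n) : ℕ) + 1 - (if n ≤ 2*((sg n b v : Fin n) : ℕ)+1 then 1 else 0)) := by
    have key : ∀ y : Fin n, (if (addEdge (cliquePair 2 n) (Sum.inl a) (Sum.inr b)).Adj (Sum.inr v) (Sum.inr y)
        then wlab n b s(Sum.inr v, Sum.inr y) else 1)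
        = (fun j : Fin n => if j = sg n b v then 1 else lab n ((sg n b v : Fin n) : ℕ) ((j : Fin n) : ℕ)) (sg n b y) := by
      intro y
      simp only
      by_cases hy : y = v
      · subst hy
        rw [if_pos rfl, if_neg]
        rw [adj_iff]
        simp
      · rw [if_neg (fun h => hy ((sg n b).injective h)), wlab_mk]
        rw [if_pos]
        · simp [wfn, lab_comm]
        · rw [adj_iff]
          exact Or.inl ⟨by simp [Ne.symm hy], rfl⟩
    rw [Finset.prod_congr rfl (fun y _ => key y)]
    refine Eq.trans (Fintype.prod_equiv (sg n b) _
      (fun j : Fin n => if j = sg n b v then 1 else lab n ((sg n b v : Fin n) : ℕ) ((j : Fin n) : ℕ))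
      (fun y => rfl)) (prod_lab n hn _)
  rw [hA, hB]
  have hee : Ee n ((sg n b v : Fin n) : ℕ) =
      (((sg n b v : Fin n) : ℕ) + 1 - (if n ≤ 2*((sg n b v : Fin n) : ℕ)+1 then 1 else 0))
        + (if v = b then 1 else 0) := by
    unfold Ee
    congr 1
    refine if_congr ?_ rfl rfl
    exact sg_eq_last_iff n b v
  rw [hee, pow_add]
  by_cases hv : v = b <;> simp [hv] <;> ring

lemma pdeg_inl_a (n : ℕ) (hn : 4 ≤ n) (a : Fin 2) (b : Fin n) :
    pdeg (addEdge (cliquePair 2 n) (Sum.inl a) (Sum.inr b)) (wlab n b) (Sum.inl a) = 2 := by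
  classical
  unfold pdeg
  rw [Finset.prod_filter, Fintype.prod_sum_type]
  have hA : (∏ x : Fin 2, if (addEdge (cliquePair 2 n) (Sum.inl a) (Sum.inr b)).Adj (Sum.inl a) (Sum.inl x)
      then wlab n b s(Sum.inl a, Sum.inl x) else 1) = 1 := by
    refine Finset.prod_eq_one (fun x _ => ?_)
    rw [wlab_mk]
    show (if _ then 1 else 1) = 1
    exact ite_self 1
  have hB : (∏ y : Fin n, if (addEdge (cliquePair 2 n) (Sum.inl a) (Sum.inr b)).Adj (Sum.inl a) (Sum.inr y)
      then wlab n b s(Sum.inl a, Sum.inr y) else 1) = 2 := by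
    have key : ∀ y : Fin n, (if (addEdge (cliquePair 2 n) (Sum.inl a) (Sum.inr b)).Adj (Sum.inl a) (Sum.inr y)
        then wlab n b s(Sum.inl a, Sum.inr y) else 1) = if y = b then 2 else 1 := by
      intro y
      refine if_congr ?_ rfl rfl
      rw [adj_iff]
      simp
    rw [Finset.prod_congr rfl (fun y _ => key y), Finset.prod_ite_eq', if_pos (Finset.mem_univ _)]
  rw [hA, hB, one_mul]

lemma pdeg_inl_other (n : ℕ) (hn : 4 ≤ n) (a : Fin 2) (b : Fin n) (x : Fin 2) (hx : x ≠ a) :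
    pdeg (addEdge (cliquePair 2 n) (Sum.inl a) (Sum.inr b)) (wlab n b) (Sum.inl x) = 1 := by
  classical
  unfold pdeg
  rw [Finset.prod_filter, Fintype.prod_sum_type]
  have hA : (∏ y : Fin 2, if (addEdge (cliquePair 2 n) (Sum.inl a) (Sum.inr b)).Adj (Sum.inl x) (Sum.inl y)
      then wlab n b s(Sum.inl x, Sum.inl y) else 1) = 1 := by
    refine Finset.prod_eq_one (fun y _ => ?_)
    rw [wlab_mk]
    show (if _ then 1 else 1) = 1
    exact ite_self 1
  have hB : (∏ y : Fin n, if (addEdge (cliquePair 2 n) (Sum.inl a) (Sum.inr b)).Adj (Sum.inl x) (Sum.inr y)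
      then wlab n b s(Sum.inl x, Sum.inr y) else 1) = 1 := by
    refine Finset.prod_eq_one (fun y _ => ?_)
    rw [if_neg]
    rw [adj_iff]
    simp [hx]
  rw [hA, hB, one_mul]

lemma Ff_le_one (n i : ℕ) : Ff n i ≤ 1 := by unfold Ff; split_ifs <;> omega

lemma val_ne_one (n i : ℕ) (hn : 4 ≤ n) (hi : i < n) : 3 ^ Ff n i * 2 ^ Ee n i ≠ 1 := by
  intro h
  have h2 : (2:ℕ) ^ Ee n i = 1 := Nat.eq_one_of_mul_eq_one_left h
  have h3 : Ee n i = 0 := by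
    by_contra h3
    have := (pow_eq_one_iff.mp h2).resolve_right h3
    omega
  have := Ee_pos n i hn hi; omega

lemma val_ne_two (n i : ℕ) (hn : 4 ≤ n) (hi : i < n) : 3 ^ Ff n i * 2 ^ Ee n i ≠ 2 := by
  intro h
  have hF : Ff n i = 0 ∨ Ff n i = 1 := by have := Ff_le_one n i; omega
  rcases hF with hF | hF
  · rw [hF, pow_zero, one_mul] at h
    have h2 : 2 ≤ Ee n i := Ee_two n i hn hi hF
    have : (2:ℕ)^2 ≤ 2 ^ Ee n i := Nat.pow_le_pow_right (by norm_num) h2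
    omega
  · rw [hF, pow_one] at h
    have : (3:ℕ) ∣ 2 := h ▸ Dvd.intro _ rfl
    omega

lemma factor_inj (F1 E1 F2 E2 : ℕ) (hF1 : F1 ≤ 1) (hF2 : F2 ≤ 1)
    (h : 3 ^ F1 * 2 ^ E1 = 3 ^ F2 * 2 ^ E2) : F1 = F2 ∧ E1 = E2 := by
  have hodd : F1 = F2 := by
    rcases Nat.le_one_iff_eq_zero_or_eq_one.mp hF1 with h1 | h1 <;>
      rcases Nat.le_one_iff_eq_zero_or_eq_one.mp hF2 with h2 | h2 <;>
        (try omega) <;> subst h1 <;> subst h2 <;> exfalso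
    · rw [pow_zero, one_mul, pow_one] at h
      have : (3:ℕ) ∣ 2 ^ E1 := h ▸ Dvd.intro _ rfl
      have := Nat.Prime.dvd_of_dvd_pow Nat.prime_three this
      omega
    · rw [pow_zero, one_mul, pow_one] at h
      have : (3:ℕ) ∣ 2 ^ E2 := h.symm ▸ Dvd.intro _ rfl
      have := Nat.Prime.dvd_of_dvd_pow Nat.prime_three this
      omega
  refine ⟨hodd, ?_⟩
  subst hodd
  have h2 : (2:ℕ) ^ E1 = 2 ^ E2 := by
    have h3 : 0 < (3:ℕ) ^ F1 := pow_pos (by norm_num) _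
    exact Nat.eq_of_mul_eq_mul_left h3 h
  exact Nat.pow_right_injective (le_refl 2) h2

lemma irr (n : ℕ) (hn : 4 ≤ n) (a : Fin 2) (b : Fin n) :
    ProductIrregular (addEdge (cliquePair 2 n) (Sum.inl a) (Sum.inr b)) (wlab n b) := by
  have cross : ∀ (x : Fin 2) (z : Fin n),
      pdeg (addEdge (cliquePair 2 n) (Sum.inl a) (Sum.inr b)) (wlab n b) (Sum.inl x) ≠
      pdeg (addEdge (cliquePair 2 n) (Sum.inl a) (Sum.inr b)) (wlab n b) (Sum.inr z) := by
    intro x z h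
    rw [pdeg_inr n hn a b z] at h
    set i : ℕ := ((sg n b z : Fin n) : ℕ) with hi
    have hilt : i < n := (sg n b z).isLt
    by_cases hx : x = a
    · rw [hx, pdeg_inl_a n hn a b] at h
      exact val_ne_two n i hn hilt h.symm
    · rw [pdeg_inl_other n hn a b x hx] at h
      exact val_ne_one n i hn hilt h.symm
  intro u v h
  cases u with
  | inl x =>
    cases v with
    | inl y =>
      by_cases hx : x = a <;> by_cases hy : y = a
      · rw [hx, hy]
      · rw [hx, pdeg_inl_a n hn a b, pdeg_inl_other n hn a b y hy] at h; omega
      · rw [hy, pdeg_inl_a n hn a b, pdeg_inl_other n hn a b x hx] at h; omega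
      · have hx' : x.val ≠ a.val := fun hh => hx (Fin.ext hh)
        have hy' : y.val ≠ a.val := fun hh => hy (Fin.ext hh)
        have h2 : x.val < 2 := x.isLt
        have h2' : y.val < 2 := y.isLt
        have h2'' : a.val < 2 := a.isLt
        congr 1
        exact Fin.ext (by omega)
    | inr z => exact absurd h (cross x z)
  | inr z =>
    cases v with
    | inl y => exact absurd h.symm (cross y z)
    | inr z' =>
      rw [pdeg_inr n hn a b z, pdeg_inr n hn a b z'] at h
      obtain ⟨hF, hE⟩ := factor_inj _ _ _ _ (Ff_le_one n _) (Ff_le_one n _) h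
      have := EF_inj n hn _ _ (sg n b z).isLt (sg n b z').isLt hF hE
      have h3 : sg n b z = sg n b z' := Fin.ext this
      exact congrArg Sum.inr ((sg n b).injective h3)

lemma lower_bound (n : ℕ) (hn : 4 ≤ n) (a : Fin 2) (b : Fin n) (s : ℕ)
    (w : Sym2 (Fin 2 ⊕ Fin n) → ℕ)
    (hw : ∀ u v : Fin 2 ⊕ Fin n, (addEdge (cliquePair 2 n) (Sum.inl a) (Sum.inr b)).Adj u v →
      w s(u, v) ∈ Finset.Icc 1 s)
    (hinj : ProductIrregular (addEdge (cliquePair 2 n) (Sum.inl a) (Sum.inr b)) w) :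
    3 ≤ s := by
  classical
  by_contra hcon
  push_neg at hcon
  have hs2 : s ≤ 2 := by omega
  set G := addEdge (cliquePair 2 n) (Sum.inl a) (Sum.inr b) with hG
  -- every vertex has a non-neighbor distinct from itself
  have hnonadj : ∀ v : Fin 2 ⊕ Fin n, ∃ z, z ≠ v ∧ ¬ G.Adj v z := by
    intro v
    cases v with
    | inl x =>
      have : ∃ u0 : Fin n, u0 ≠ b := by
        by_cases h0 : (b : ℕ) = 0
        · exact ⟨⟨1, by omega⟩, fun he => by rw [Fin.ext_iff] at he; simp at he; omega⟩
        · exact ⟨⟨0, by omega⟩, fun he => by rw [Fin.ext_iff] at he; simp at he; omega⟩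
      obtain ⟨u0, hu0⟩ := this
      refine ⟨Sum.inr u0, by simp, ?_⟩
      rw [hG, adj_iff]
      simp [hu0]
    | inr u =>
      refine ⟨Sum.inl (a + 1), by simp, ?_⟩
      rw [hG, adj_iff]
      have hall : ∀ c : Fin 2, c + 1 ≠ c := by decide
      have : a + 1 ≠ a := hall a
      simp [this.symm, Ne.symm this]
  -- each pdeg is a power of 2 with exponent at most n
  have key : ∀ v : Fin 2 ⊕ Fin n, ∃ k ≤ n, pdeg G w v = 2 ^ k := by
    intro v
    obtain ⟨z, hzne, hznadj⟩ := hnonadj v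
    set N := Finset.univ.filter (fun u => G.Adj v u) with hN
    have hsub : N ⊆ (Finset.univ.erase v).erase z := by
      intro u hu
      rw [hN, Finset.mem_filter] at hu
      rw [Finset.mem_erase, Finset.mem_erase]
      refine ⟨fun he => hznadj (he ▸ hu.2), hu.2.ne', Finset.mem_univ _⟩
    have hNcard : N.card ≤ n := by
      have h1 := Finset.card_le_card hsub
      have h2 : ((Finset.univ.erase v).erase z).card = n := by
        rw [Finset.card_erase_of_mem, Finset.card_erase_of_mem (Finset.mem_univ _)]
        · have : Fintype.card (Fin 2 ⊕ Fin n) = 2 + n := by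
            rw [Fintype.card_sum, Fintype.card_fin, Fintype.card_fin]
          rw [Finset.card_univ, this]
          omega
        · rw [Finset.mem_erase]
          exact ⟨hzne, Finset.mem_univ _⟩
      omega
    have hfac : ∀ u ∈ N, w s(v, u) = (if w s(v, u) = 2 then 2 else 1) := by
      intro u hu
      rw [hN, Finset.mem_filter] at hu
      have := hw v u hu.2
      rw [Finset.mem_Icc] at this
      split_ifs with h
      · exact h
      · omega
    refine ⟨(N.filter (fun u => w s(v, u) = 2)).card, le_trans (Finset.card_filter_le _ _) hNcard, ?_⟩
    unfold pdeg
    rw [Finset.prod_congr rfl hfac, Finset.prod_ite, Finset.prod_const, Finset.prod_const_one,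
      mul_one]
  -- pigeonhole
  have himg : ∀ v : Fin 2 ⊕ Fin n, pdeg G w v ∈ (Finset.range (n+1)).image (2 ^ ·) := by
    intro v
    obtain ⟨k, hk, hpk⟩ := key v
    rw [Finset.mem_image]
    exact ⟨k, Finset.mem_range.mpr (by omega), hpk.symm⟩
  have hcard : (Finset.univ : Finset (Fin 2 ⊕ Fin n)).card ≤
      ((Finset.range (n+1)).image (2 ^ ·)).card :=
    Finset.card_le_card_of_injOn (pdeg G w) (fun v _ => himg v) hinj.injOn
  have h1 : (Finset.univ : Finset (Fin 2 ⊕ Fin n)).card = n + 2 := by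
    rw [Finset.card_univ, Fintype.card_sum, Fintype.card_fin, Fintype.card_fin]
    omega
  have h2 : ((Finset.range (n+1)).image (2 ^ ·)).card ≤ n + 1 := by
    exact le_trans (Finset.card_image_le) (by rw [Finset.card_range])
  omega


/-- For every `n ≥ 4`, the graph obtained from `K_2 + K_n` by adding one edge between
the two components has product irregularity strength `3`. -/
theorem stmt_6 (n : ℕ) (hn : 4 ≤ n) (a : Fin 2) (b : Fin n) :
    ps (addEdge (cliquePair 2 n) (Sum.inl a) (Sum.inr b)) = 3 := by
  have hmem : 3 ∈ {s : ℕ | ∃ w : Sym2 (Fin 2 ⊕ Fin n) → ℕ,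
      (∀ u v : Fin 2 ⊕ Fin n, (addEdge (cliquePair 2 n) (Sum.inl a) (Sum.inr b)).Adj u v →
        w s(u, v) ∈ Finset.Icc 1 3) ∧
      ProductIrregular (addEdge (cliquePair 2 n) (Sum.inl a) (Sum.inr b)) w} :=
    ⟨wlab n b, fun u v _ => wlab_mem n b u v, irr n hn a b⟩
  refine le_antisymm (Nat.sInf_le hmem) (le_csInf ⟨3, hmem⟩ ?_)
  rintro s ⟨w, hw, hinj⟩
  exact lower_bound n hn a b s w hw hinj
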